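/- Equivalence of the fixed-point equations with stationarity of the surrogate: under the setup of the minorization property (K ≥ 2, β ∈ (0,1], γ > 0, η > 0, ν ∈ ℝ^K, s with positive entries, current iterate α⁰ with positive entries, u⁰ = ∑ α⁰_i, x⁰ = K(1−β) + β·u⁰), a point α ∈ ℝ^K with all entries positive maximizes the surrogate M(α) := log Γ(x⁰) + β·Ψ(x⁰)·(∑_i α_i − u⁰) − ∑_i log Γ(β·α_i + (1−β)) + β·∑_i α_i·log s_i + γ·η·[log Γ(u⁰) + Ψ(u⁰)·(∑_i α_i − u⁰) − ∑_i log Γ(α_i)] − γ·∑_i α_i·ν_i over the positive orthant if and only if for every j ∈ {1,…,K}: β·Ψ(β·α_j + (1−β)) + γ·η·Ψ(α_j) = β·Ψ(x⁰) + β·log s_j + γ·η·Ψ(u⁰) − γ·ν_j. -/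

import Mathlib

/-- The digamma function: derivative of `log ∘ Γ`. -/
noncomputable def digamma : ℝ → ℝ := deriv (fun x : ℝ => Real.log (Real.Gamma x))

lemma digamma_hasDerivAt {x : ℝ} (hx : 0 < x) :
    HasDerivAt (fun t : ℝ => Real.log (Real.Gamma t)) (digamma x) x := by
  have h1 : DifferentiableAt ℝ Real.Gamma x :=
    Real.differentiableAt_Gamma (fun m => by
      have : -(m : ℝ) ≤ 0 := neg_nonpos.mpr (Nat.cast_nonneg m)
      exact ne_of_gt (lt_of_le_of_lt this hx))
  have h2 : Real.Gamma x ≠ 0 := (Real.Gamma_pos_of_pos hx).ne'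
  have h3 : DifferentiableAt ℝ (fun t => Real.log (Real.Gamma t)) x := h1.log h2
  simpa [digamma] using h3.hasDerivAt

lemma convexOn_logGamma : ConvexOn ℝ (Set.Ioi (0:ℝ))
    (fun t : ℝ => Real.log (Real.Gamma t)) := by
  simpa [Function.comp_def] using Real.convexOn_log_Gamma

/-- Supporting line inequality for a convex function on `Ioi 0`. -/
lemma tangent_le {g : ℝ → ℝ} (hg : ConvexOn ℝ (Set.Ioi (0:ℝ)) g) {a b g' : ℝ}
    (ha : 0 < a) (hb : 0 < b) (hd : HasDerivAt g g' a) :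
    g a + g' * (b - a) ≤ g b := by
  rcases lt_trichotomy a b with h | h | h
  · have := hg.le_slope_of_hasDerivAt ha hb h hd
    rw [slope_def_field] at this
    have h' : g' * (b - a) ≤ g b - g a := by
      rw [← le_div_iff₀ (by linarith)] at *
      exact this
    linarith
  · subst h; simp
  · have := hg.slope_le_of_hasDerivAt hb ha h hd
    rw [slope_def_field] at this
    have h' : g a - g b ≤ g' * (a - b) := by
      rw [div_le_iff₀ (by linarith)] at this
      linarith
    linarith

/-- Equivalence of the fixed-point equations with stationarity of the
surrogate: `α` with positive entries maximizes the tangent-line surrogate `M`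
(built at the current iterate `α⁰`) over the positive orthant if and only if
the fixed-point update equations hold at `α`. -/
theorem surrogate_max_iff_fixedPoint (K : ℕ) (hK : 2 ≤ K) (β γ η : ℝ)
    (hβ : 0 < β) (hβ1 : β ≤ 1) (hγ : 0 < γ) (hη : 0 < η)
    (ν s : Fin K → ℝ) (hs : ∀ i, 0 < s i)
    (α₀ : Fin K → ℝ) (hα₀ : ∀ i, 0 < α₀ i)
    (u₀ x₀ : ℝ) (hu₀ : u₀ = ∑ i, α₀ i) (hx₀ : x₀ = (K : ℝ) * (1 - β) + β * u₀)
    (M : (Fin K → ℝ) → ℝ)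
    (hM : ∀ α, M α =
      Real.log (Real.Gamma x₀) + β * digamma x₀ * ((∑ i, α i) - u₀)
        - ∑ i, Real.log (Real.Gamma (β * α i + (1 - β)))
        + β * ∑ i, α i * Real.log (s i)
        + γ * η * (Real.log (Real.Gamma u₀) + digamma u₀ * ((∑ i, α i) - u₀)
            - ∑ i, Real.log (Real.Gamma (α i)))
        - γ * ∑ i, α i * ν i)
    (α : Fin K → ℝ) (hα : ∀ i, 0 < α i) :
    (∀ α' : Fin K → ℝ, (∀ i, 0 < α' i) → M α' ≤ M α) ↔
      (∀ j : Fin K,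
        β * digamma (β * α j + (1 - β)) + γ * η * digamma (α j) =
          β * digamma x₀ + β * Real.log (s j) + γ * η * digamma u₀ - γ * ν j) := by
  set g : ℝ → ℝ := fun t => Real.log (Real.Gamma t) with hg
  set c : Fin K → ℝ := fun j =>
    β * digamma x₀ + β * Real.log (s j) + γ * η * digamma u₀ - γ * ν j with hc
  set f : Fin K → ℝ → ℝ := fun j t =>
    c j * t - g (β * t + (1 - β)) - γ * η * g t with hf
  set C : ℝ := Real.log (Real.Gamma x₀) - β * digamma x₀ * u₀
      + γ * η * (Real.log (Real.Gamma u₀) - digamma u₀ * u₀) with hC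
  -- separability of M
  have hMsum : ∀ α' : Fin K → ℝ, M α' = C + ∑ i, f i (α' i) := by
    intro α'
    have hterm : ∀ i, f i (α' i) =
        (β * digamma x₀) * α' i + β * (α' i * Real.log (s i))
          + (γ * η * digamma u₀) * α' i - γ * (α' i * ν i)
          - g (β * α' i + (1 - β)) - γ * η * g (α' i) := by
      intro i; simp only [hf, hc]; ring
    rw [hM α', Finset.sum_congr rfl (fun i _ => hterm i)]
    simp only [Finset.sum_sub_distrib, Finset.sum_add_distrib, ← Finset.mul_sum]
    simp only [hC, hg]
    ring
  -- positivity of the affine argument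
  have haffpos : ∀ t : ℝ, 0 < t → 0 < β * t + (1 - β) := by
    intro t ht; nlinarith
  -- derivative of each coordinate function
  have hfd : ∀ (j : Fin K) (t : ℝ), 0 < t →
      HasDerivAt (f j) (c j - β * digamma (β * t + (1 - β)) - γ * η * digamma t) t := by
    intro j t ht
    have h1 : HasDerivAt (fun y : ℝ => c j * y) (c j) t := by
      simpa using (hasDerivAt_id t).const_mul (c j)
    have haff : HasDerivAt (fun y : ℝ => β * y + (1 - β)) β t := by
      simpa using ((hasDerivAt_id t).const_mul β).add_const (1 - β)
    have h2 : HasDerivAt (fun y : ℝ => g (β * y + (1 - β)))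
        (digamma (β * t + (1 - β)) * β) t :=
      by have := (digamma_hasDerivAt (haffpos t ht)).comp t haff; exact this
    have h3 : HasDerivAt (fun y : ℝ => γ * η * g y) (γ * η * digamma t) t :=
      (digamma_hasDerivAt ht).const_mul (γ * η)
    have := (h1.sub h2).sub h3
    rw [show c j - β * digamma (β * t + (1 - β)) - γ * η * digamma t =
      c j - digamma (β * t + (1 - β)) * β - γ * η * digamma t by ring]
    exact this
  constructor
  · -- maximizer ⇒ fixed-point equations
    intro hmax j
    have hloc : ∀ t : ℝ, 0 < t → f j t ≤ f j (α j) := by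
      intro t ht
      have hpos' : ∀ i, 0 < Function.update α j t i := by
        intro i
        rcases eq_or_ne i j with rfl | h
        · simpa using ht
        · simpa [Function.update_of_ne h] using hα i
      have hle := hmax _ hpos'
      rw [hMsum, hMsum] at hle
      have key : ∑ i, f i (Function.update α j t i) - ∑ i, f i (α i)
          = f j t - f j (α j) := by
        rw [← Finset.sum_sub_distrib, Finset.sum_eq_single j]
        · simp
        · intro i _ hij; simp [Function.update_of_ne hij]
        · simp
      linarith
    have hlm : IsLocalMax (f j) (α j) := by
      filter_upwards [isOpen_Ioi.mem_nhds (Set.mem_Ioi.mpr (hα j))] with t ht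
      exact hloc t ht
    have hz := hlm.deriv_eq_zero
    rw [(hfd j (α j) (hα j)).deriv] at hz
    simp only [hc] at hz
    linarith
  · -- fixed-point equations ⇒ maximizer
    intro heq α' hα'
    rw [hMsum, hMsum]
    have hle : ∀ i ∈ Finset.univ, f i (α' i) ≤ f i (α i) := by
      intro i _
      have hzero : c i - β * digamma (β * α i + (1 - β)) - γ * η * digamma (α i) = 0 := by
        have := heq i; simp only [hc]; linarith
      have t1 := tangent_le convexOn_logGamma (haffpos _ (hα i)) (haffpos _ (hα' i))
        (digamma_hasDerivAt (haffpos _ (hα i)))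
      have t2 := tangent_le convexOn_logGamma (hα i) (hα' i)
        (digamma_hasDerivAt (hα i))
      have B : γ * η * (digamma (α i) * (α' i - α i))
          ≤ γ * η * (Real.log (Real.Gamma (α' i)) - Real.log (Real.Gamma (α i))) :=
        mul_le_mul_of_nonneg_left (by linarith) (by positivity)
      have hz2 : (c i - β * digamma (β * α i + (1 - β)) - γ * η * digamma (α i))
          * (α' i - α i) = 0 := by rw [hzero]; ring
      simp only [hf, hg]
      nlinarith [t1, B, hz2]
    linarith [Finset.sum_le_sum hle]
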